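/- Let G be a finite undirected graph and let C be a set of at least two vertices of G that is closed under the relation of 2-edge-connectivity (i.e., C is a 2-edge-connected class: every two vertices of C are 2-edge-connected in G, and no vertex outside C is 2-edge-connected in G to a vertex of C). Then the induced subgraph G[C] is 2-edge-connected; that is, G[C] is connected and has no cut consisting of a single edge. -/

import Mathlib

open SimpleGraph

/-- The set of edges of `G` with exactly one endpoint in `A`: the edges of the
cut `(A, Aᶜ)`, also known as the boundary `∂_G(A)`. -/
def cutEdges {V : Type*} (G : SimpleGraph V) (A : Set V) : Set (Sym2 V) :=
  {e | e ∈ G.edgeSet ∧ ∃ u v, e = s(u, v) ∧ u ∈ A ∧ v ∉ A}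

/-- `G` is `c`-edge-connected: every cut of `G` has at least `c` edges.
(In particular a one-vertex graph is `c`-edge-connected.) -/
def IsCEdgeConn {V : Type*} (G : SimpleGraph V) (c : ℕ) : Prop :=
  ∀ A : Set V, A.Nonempty → Aᶜ.Nonempty → c ≤ (cutEdges G A).ncard

/-- `C` is (the vertex set of) a `c`-edge-connected component of `G`:
a maximal set of vertices whose induced subgraph is `c`-edge-connected. -/
def IsCComp {V : Type*} (G : SimpleGraph V) (c : ℕ) (C : Set V) : Prop :=
  C.Nonempty ∧ IsCEdgeConn (G.induce C) c ∧
    ∀ D : Set V, C ⊆ D → IsCEdgeConn (G.induce D) c → D = C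

/-- `u` and `v` are `c`-edge-connected in `G`: there exist `c` pairwise
edge-disjoint paths from `u` to `v`. -/
def CEdgeConnPair {V : Type*} (G : SimpleGraph V) (c : ℕ) (u v : V) : Prop :=
  ∃ P : Fin c → G.Walk u v, (∀ i, (P i).IsPath) ∧
    ∀ i j : Fin c, i ≠ j → ∀ e ∈ (P i).edges, e ∉ (P j).edges

/-- if `C` is a set of at least two vertices that is a 2-edge-connected
class of `G` (every two vertices of `C` are 2-edge-connected in `G` and no vertex outside
`C` is 2-edge-connected to a vertex of `C`), then the induced subgraph `G[C]` is
2-edge-connected, i.e. it has no cut of size less than 2. -/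
theorem stmt8 {V : Type*} [Fintype V] (G : SimpleGraph V) (C : Set V)
    (hcard : 2 ≤ C.ncard)
    (hconn : ∀ u ∈ C, ∀ v ∈ C, CEdgeConnPair G 2 u v)
    (hclosed : ∀ u ∈ C, ∀ v : V, v ∉ C → ¬ CEdgeConnPair G 2 u v) :
    IsCEdgeConn (G.induce C) 2 := by
  classical
  intro A hA hAc
  obtain ⟨u, hu⟩ := hA
  obtain ⟨v, hv⟩ := hAc
  obtain ⟨P, hpath, hdisj⟩ := hconn u.val u.2 v.val v.2
  -- Step 1: all vertices on the paths are in C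
  have hsupp : ∀ i : Fin 2, ∀ w ∈ (P i).support, w ∈ C := by
    intro i w hw
    by_contra hwC
    refine hclosed u.val u.2 w hwC ?_
    set j : Fin 2 := i + 1 with hj
    have hij : i ≠ j := by fin_cases i <;> simp [hj] <;> decide
    set Q1 : G.Walk u.val w := (P i).takeUntil w hw with hQ1
    set R : G.Walk w u.val := ((P i).dropUntil w hw).append (P j).reverse with hR
    set Q2 : G.Walk u.val w := R.reverse.bypass with hQ2
    have hQ1path : Q1.IsPath := (hpath i).takeUntil hw
    have hQ2path : Q2.IsPath := R.reverse.bypass_isPath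
    have hkey : ∀ e, e ∈ Q1.edges → e ∈ Q2.edges → False := by
      intro e he1 he2
      have he2' : e ∈ R.edges := by
        have := R.reverse.edges_bypass_subset he2
        rwa [SimpleGraph.Walk.edges_reverse, List.mem_reverse] at this
      rw [hR, SimpleGraph.Walk.edges_append, List.mem_append] at he2'
      rcases he2' with h | h
      · have hnodup : (Q1.edges ++ ((P i).dropUntil w hw).edges).Nodup := by
          have := (hpath i).edges_nodup
          rw [← (P i).take_spec hw, SimpleGraph.Walk.edges_append] at this
          exact this
        exact (List.disjoint_of_nodup_append hnodup) he1 h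
      · rw [SimpleGraph.Walk.edges_reverse, List.mem_reverse] at h
        exact hdisj i j hij e ((P i).edges_takeUntil_subset hw he1) h
    refine ⟨![Q1, Q2], ?_, ?_⟩
    · intro k; fin_cases k <;> simpa
    · intro k l hkl e hek hel
      fin_cases k <;> fin_cases l <;> simp_all <;>
        exact hkey e (by assumption) (by assumption)
  -- Step 2: boundary darts
  set A' : Set V := Subtype.val '' A with hA'
  have huA' : u.val ∈ A' := ⟨u, hu, rfl⟩
  have hvA' : v.val ∉ A' := by
    rintro ⟨x, hx, hxv⟩
    exact hv (by rwa [Subtype.ext hxv] at hx)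
  have hdart : ∀ i : Fin 2, ∃ d : G.Dart, d ∈ (P i).darts ∧ d.fst ∈ A' ∧ d.snd ∉ A' :=
    fun i => (P i).exists_boundary_dart A' huA' hvA'
  choose d hd hdfst hdsnd using hdart
  have hfstC : ∀ i, (d i).fst ∈ C := fun i =>
    SimpleGraph.Walk.dart_fst_mem_support_of_mem_darts _ (hd i) |> hsupp i _
  have hsndC : ∀ i, (d i).snd ∈ C := fun i =>
    SimpleGraph.Walk.dart_snd_mem_support_of_mem_darts _ (hd i) |> hsupp i _
  set e : Fin 2 → Sym2 ↥C :=
    fun i => s((⟨(d i).fst, hfstC i⟩ : ↥C), ⟨(d i).snd, hsndC i⟩) with he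
  have hmem : ∀ i, e i ∈ cutEdges (G.induce C) A := by
    intro i
    refine ⟨?_, ⟨(d i).fst, hfstC i⟩, ⟨(d i).snd, hsndC i⟩, rfl, ?_, ?_⟩
    · simpa [he] using (d i).adj
    · obtain ⟨x, hx, hxv⟩ := hdfst i
      rwa [show (⟨(d i).fst, hfstC i⟩ : ↥C) = x from Subtype.ext hxv.symm]
    · intro hmem
      exact hdsnd i ⟨_, hmem, rfl⟩
  have hne : e 0 ≠ e 1 := by
    intro h
    have h' : (d 0).edge = (d 1).edge := by
      have := congrArg (Sym2.map Subtype.val) h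
      simpa [he, Sym2.map_pair_eq, SimpleGraph.Dart.edge] using this
    have h0 : (d 0).edge ∈ (P 0).edges := List.mem_map_of_mem (hd 0)
    have h1 : (d 1).edge ∈ (P 1).edges := List.mem_map_of_mem (hd 1)
    exact hdisj 0 1 (by decide) _ h0 (h' ▸ h1)
  have hfin : (cutEdges (G.induce C) A).Finite := Set.toFinite _
  have := (Set.one_lt_ncard hfin).mpr ⟨e 0, hmem 0, e 1, hmem 1, hne⟩
  omega
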